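/- Let b ∈ ℝ and u ∈ (0,1). Then there exists a unique z_l ∈ ℝ with z_l < −b/2 such that Φ(−z_l) − Φ(z_l + b) = 1 − u, and a unique z_h ∈ ℝ with z_h > −b/2 such that Φ(z_h + b) − Φ(−z_h) = 1 − u; equivalently, each value u ∈ (0,1) of the FAB p-value function z ↦ p(z,b) is attained at exactly two points, one on each side of −b/2. -/

import Mathlib

open MeasureTheory ProbabilityTheory

/-- Φ, the standard normal cumulative distribution function. -/
noncomputable def Phi : ℝ → ℝ := fun x => ProbabilityTheory.cdf (gaussianReal 0 1) x

/-- The FAB p-value function. -/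
noncomputable def fabP (z b : ℝ) : ℝ := 1 - |Phi (z + b) - Phi (-z)|

lemma Phi_strictMono : StrictMono Phi := by
  intro x y hxy
  have hv : (1 : NNReal) ≠ 0 := one_ne_zero
  have hac := gaussianReal_absolutelyContinuous' 0 hv
  have hpos : gaussianReal 0 1 (Set.Ioc x y) ≠ 0 := by
    intro h
    have := hac h
    rw [Real.volume_Ioc] at this
    simp [ENNReal.ofReal_eq_zero, hxy, not_le.mpr (sub_pos.mpr hxy)] at this
  have hmeas : gaussianReal 0 1 (Set.Iic x) < gaussianReal 0 1 (Set.Iic y) := by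
    have hunion : Set.Iic y = Set.Iic x ∪ Set.Ioc x y := (Set.Iic_union_Ioc_eq_Iic hxy.le).symm
    rw [hunion, measure_union (by simp [Set.disjoint_left]; intro a ha; exact fun h => absurd ha (not_le.mpr h)) measurableSet_Ioc]
    have h1 : gaussianReal 0 1 (Set.Ioc x y) ≠ ⊤ := measure_ne_top _ _
    exact ENNReal.lt_add_right (measure_ne_top _ _) hpos
  have h1 := cdf_eq_real (gaussianReal 0 1) x
  have h2 := cdf_eq_real (gaussianReal 0 1) y
  simp only [Phi, h1, h2, measureReal_def]
  exact ENNReal.toReal_lt_toReal (measure_ne_top _ _) (measure_ne_top _ _) |>.mpr hmeas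

lemma Phi_continuous : Continuous Phi := by
  have hv : (1 : NNReal) ≠ 0 := one_ne_zero
  rw [continuous_iff_continuousAt]
  intro x
  have hmono : Monotone Phi := Phi_strictMono.monotone
  have hPhi : Phi = ⇑(cdf (gaussianReal 0 1)) := rfl
  rw [hmono.continuousAt_iff_leftLim_eq_rightLim, hPhi]
  have hr : Function.rightLim (cdf (gaussianReal 0 1)) x = cdf (gaussianReal 0 1) x :=
    (cdf (gaussianReal 0 1)).rightLim_eq x
  have hsing : (cdf (gaussianReal 0 1)).measure {x} = ENNReal.ofReal
      (cdf (gaussianReal 0 1) x - Function.leftLim (cdf (gaussianReal 0 1)) x) :=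
    (cdf (gaussianReal 0 1)).measure_singleton x
  rw [measure_cdf] at hsing
  have h0 : gaussianReal 0 1 {x} = 0 :=
    gaussianReal_absolutelyContinuous 0 hv (by simp)
  rw [h0] at hsing
  have hle : Function.leftLim (cdf (gaussianReal 0 1)) x ≤ cdf (gaussianReal 0 1) x :=
    (cdf (gaussianReal 0 1)).mono.leftLim_le le_rfl
  have : cdf (gaussianReal 0 1) x - Function.leftLim (cdf (gaussianReal 0 1)) x ≤ 0 := by
    by_contra h
    push_neg at h
    rw [eq_comm, ENNReal.ofReal_eq_zero] at hsing
    linarith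
  have hL : Function.leftLim (⇑(cdf (gaussianReal 0 1))) x = cdf (gaussianReal 0 1) x :=
    le_antisymm hle (by linarith)
  rw [hL]; exact hr.symm

lemma g_facts (b : ℝ) : StrictMono (fun z => Phi (z + b) - Phi (-z)) ∧
    Continuous (fun z => Phi (z + b) - Phi (-z)) ∧
    Filter.Tendsto (fun z => Phi (z + b) - Phi (-z)) Filter.atTop (nhds 1) ∧
    Filter.Tendsto (fun z => Phi (z + b) - Phi (-z)) Filter.atBot (nhds (-1)) := by
  refine ⟨?_, ?_, ?_, ?_⟩
  · intro x y hxy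
    have h1 : Phi (x + b) < Phi (y + b) := Phi_strictMono (by linarith)
    have h2 : Phi (-y) < Phi (-x) := Phi_strictMono (by linarith)
    dsimp only; linarith
  · exact (Phi_continuous.comp (continuous_id.add continuous_const)).sub
      (Phi_continuous.comp continuous_neg)
  · have h1 : Filter.Tendsto (fun z : ℝ => Phi (z + b)) Filter.atTop (nhds 1) :=
      (tendsto_cdf_atTop (gaussianReal 0 1)).comp (Filter.tendsto_atTop_add_const_right _ b Filter.tendsto_id)
    have h2 : Filter.Tendsto (fun z : ℝ => Phi (-z)) Filter.atTop (nhds 0) :=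
      (tendsto_cdf_atBot (gaussianReal 0 1)).comp Filter.tendsto_neg_atTop_atBot
    simpa using h1.sub h2
  · have h1 : Filter.Tendsto (fun z : ℝ => Phi (z + b)) Filter.atBot (nhds 0) :=
      (tendsto_cdf_atBot (gaussianReal 0 1)).comp (Filter.tendsto_atBot_add_const_right _ b Filter.tendsto_id)
    have h2 : Filter.Tendsto (fun z : ℝ => Phi (-z)) Filter.atBot (nhds 1) :=
      (tendsto_cdf_atTop (gaussianReal 0 1)).comp Filter.tendsto_neg_atBot_atTop
    have := h1.sub h2
    simpa using this

lemma g_surj (b c : ℝ) (hc1 : -1 < c) (hc2 : c < 1) :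
    ∃ z : ℝ, Phi (z + b) - Phi (-z) = c := by
  obtain ⟨hm, hcont, htop, hbot⟩ := g_facts b
  set g := fun z => Phi (z + b) - Phi (-z)
  obtain ⟨a, ha⟩ : ∃ a, g a < c := by
    have := hbot.eventually (eventually_lt_nhds hc1)
    exact (this.exists)
  obtain ⟨d, hd⟩ : ∃ d, c < g d := by
    have := htop.eventually (eventually_gt_nhds hc2)
    exact (this.exists)
  have hle : a ≤ d := le_of_lt (hm.lt_iff_lt.mp (ha.trans hd))
  have := intermediate_value_Icc hle (hcont.continuousOn)
  have hmem : c ∈ Set.Icc (g a) (g d) := ⟨ha.le, hd.le⟩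
  obtain ⟨z, _, hz⟩ := this hmem
  exact ⟨z, hz⟩

lemma g_half (b : ℝ) : Phi (-b / 2 + b) - Phi (-(-b / 2)) = 0 := by
  have : -b / 2 + b = -(-b / 2) := by ring
  rw [this, sub_self]

theorem stmt_19 (b u : ℝ) (hu : u ∈ Set.Ioo (0 : ℝ) 1) :
    (∃! zl : ℝ, zl < -b / 2 ∧ Phi (-zl) - Phi (zl + b) = 1 - u) ∧
      ∃! zh : ℝ, -b / 2 < zh ∧ Phi (zh + b) - Phi (-zh) = 1 - u := by
  obtain ⟨hu0, hu1⟩ := hu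
  obtain ⟨hm, _, _, _⟩ := g_facts b
  constructor
  · obtain ⟨z, hz⟩ := g_surj b (u - 1) (by linarith) (by linarith)
    refine ⟨z, ⟨?_, by linarith⟩, ?_⟩
    · have : Phi (z + b) - Phi (-z) < Phi (-b / 2 + b) - Phi (-(-b / 2)) := by
        rw [g_half b, hz]; linarith
      exact hm.lt_iff_lt.mp this
    · rintro y ⟨_, hy2⟩
      exact hm.injective (show Phi (y + b) - Phi (-y) = Phi (z + b) - Phi (-z) by
        rw [hz]; linarith)
  · obtain ⟨z, hz⟩ := g_surj b (1 - u) (by linarith) (by linarith)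
    refine ⟨z, ⟨?_, hz⟩, ?_⟩
    · have : Phi (-b / 2 + b) - Phi (-(-b / 2)) < Phi (z + b) - Phi (-z) := by
        rw [g_half b, hz]; linarith
      exact hm.lt_iff_lt.mp this
    · rintro y ⟨_, hy2⟩
      exact hm.injective (show Phi (y + b) - Phi (-y) = Phi (z + b) - Phi (-z) by
        rw [hz, hy2])
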